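/- Let f = Σ_{r=0}^n x_r^{d_1} g_r be a CW-Nagata polynomial of bidegree (d_1,d_2), with g_r = u_1^{r_1}⋯u_m^{r_m}. The ideal Ann(f) of T is generated by the following elements: (1) the products X_iX_j for 0 ≤ i < j ≤ n and the powers X_k^{d_1+1} for 0 ≤ k ≤ n; (2) all monic monomials of degree d_2+1 in U_1,…,U_m; (3) for each 1 ≤ j ≤ d_2, the monomials U_1^{s_1}⋯U_m^{s_m} with s_1+⋯+s_m = j such that u_1^{s_1}⋯u_m^{s_m} divides no g_r and is minimal (with respect to divisibility) with this property; (4) the monomials X_rU_i such that u_i does not divide g_r; (5) for each 1 ≤ j ≤ d_2, the monomials X_s·U_1^{t_1}⋯U_m^{t_m} with t_1+⋯+t_m = j such that u_1^{t_1}⋯u_m^{t_m} is minimal (with respect to divisibility) among the monomials not dividing g_s; (6) the binomials X_r^{d_1}U_1^{ρ_1}⋯U_m^{ρ_m} − X_s^{d_1}U_1^{σ_1}⋯U_m^{σ_m}, where ρ_1+⋯+ρ_m = σ_1+⋯+σ_m, g_{r,s} = gcd(g_r,g_s), g_r = u_1^{ρ_1}⋯u_m^{ρ_m}·g_{r,s}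 and g_s = u_1^{σ_1}⋯u_m^{σ_m}·g_{r,s}. -/

import Mathlib

open MvPolynomial

namespace CW

variable {σ K : Type*} [CommSemiring K]

/-- A generic "monomial contraction-type" action of the polynomial ring on itself,
determined by a structure coefficient `ν c a` (the coefficient produced when the
operator monomial with exponent `a` acts on the monomial with exponent `c`). -/
noncomputable def genAct (ν : (σ →₀ ℕ) → (σ →₀ ℕ) → K) (α f : MvPolynomial σ K) :
    MvPolynomial σ K :=
  Finsupp.sum (AddMonoidAlgebra.coeff α) fun a ca => Finsupp.sum (AddMonoidAlgebra.coeff f) fun c cf => monomial (c - a) (ν c a * (ca * cf))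

theorem genAct_zero_left (ν : (σ →₀ ℕ) → (σ →₀ ℕ) → K) (f : MvPolynomial σ K) :
    genAct ν 0 f = 0 :=
  Finsupp.sum_zero_index

theorem genAct_zero_right (ν : (σ →₀ ℕ) → (σ →₀ ℕ) → K) (α : MvPolynomial σ K) :
    genAct ν α 0 = 0 := by
  unfold genAct
  simp only [AddMonoidAlgebra.coeff_zero, Finsupp.sum_zero_index]
  simp [Finsupp.sum]

theorem genAct_add_left (ν : (σ →₀ ℕ) → (σ →₀ ℕ) → K) (α β f : MvPolynomial σ K) :
    genAct ν (α + β) f = genAct ν α f + genAct ν β f := by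
  unfold genAct
  rw [AddMonoidAlgebra.coeff_add]
  apply Finsupp.sum_add_index'
  · intro a
    simp [Finsupp.sum]
  · intro a b₁ b₂
    rw [← Finsupp.sum_add]
    apply Finsupp.sum_congr
    intro c _
    rw [add_mul, mul_add, map_add]

theorem genAct_add_right (ν : (σ →₀ ℕ) → (σ →₀ ℕ) → K) (α f g : MvPolynomial σ K) :
    genAct ν α (f + g) = genAct ν α f + genAct ν α g := by
  unfold genAct
  rw [← Finsupp.sum_add]
  apply Finsupp.sum_congr
  intro a _
  rw [AddMonoidAlgebra.coeff_add]
  apply Finsupp.sum_add_index'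
  · intro c
    simp only [mul_zero, map_zero]
  · intro c c₁ c₂
    rw [mul_add, mul_add, map_add]

theorem genAct_monomial (ν : (σ →₀ ℕ) → (σ →₀ ℕ) → K) (a c : σ →₀ ℕ) (r s : K) :
    genAct ν (monomial a r) (monomial c s) = monomial (c - a) (ν c a * (r * s)) := by
  unfold genAct
  rw [← single_eq_monomial a r, ← single_eq_monomial c s]
  simp only [AddMonoidAlgebra.coeff_single]
  rw [Finsupp.sum_single_index, Finsupp.sum_single_index]
  · simp only [mul_zero, map_zero]
  · simp [Finsupp.sum]

theorem genAct_mul {ν : (σ →₀ ℕ) → (σ →₀ ℕ) → K}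
    (hν : ∀ c a b, ν c (a + b) = ν c b * ν (c - b) a) (α β f : MvPolynomial σ K) :
    genAct ν (α * β) f = genAct ν α (genAct ν β f) := by
  induction α using MvPolynomial.induction_on' with
  | add p q hp hq => rw [add_mul, genAct_add_left, hp, hq, genAct_add_left]
  | monomial a r =>
    induction β using MvPolynomial.induction_on' with
    | add p q hp hq =>
      rw [mul_add, genAct_add_left, hp, hq, ← genAct_add_right, genAct_add_left]
    | monomial b s =>
      induction f using MvPolynomial.induction_on' with
      | add p q hp hq =>
        rw [genAct_add_right, hp, hq, ← genAct_add_right, ← genAct_add_right]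
      | monomial c t =>
        rw [monomial_mul, genAct_monomial, genAct_monomial, genAct_monomial,
          show c - (a + b) = c - b - a from by rw [tsub_tsub, add_comm], hν]
        congr 1
        ring

/-- The annihilator ideal of `f` under the action `genAct ν`. -/
noncomputable def annG (ν : (σ →₀ ℕ) → (σ →₀ ℕ) → K)
    (hν : ∀ c a b, ν c (a + b) = ν c b * ν (c - b) a) (f : MvPolynomial σ K) :
    Ideal (MvPolynomial σ K) where
  carrier := {α | genAct ν α f = 0}
  zero_mem' := genAct_zero_left ν f
  add_mem' := by
    intro a b ha hb
    show genAct ν (a + b) f = 0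
    rw [genAct_add_left, ha, hb, add_zero]
  smul_mem' := by
    intro c α hα
    show genAct ν (c * α) f = 0
    rw [genAct_mul hν, hα, genAct_zero_right]

/-- Structure coefficient of the contraction (apolarity) action: `X^a` sends `x^c`
to `x^(c-a)` if `a ≤ c` and to `0` otherwise. -/
noncomputable def cnu (c a : σ →₀ ℕ) : K :=
  open scoped Classical in if a ≤ c then 1 else 0

theorem cnu_mul (c a b : σ →₀ ℕ) :
    (cnu c (a + b) : K) = cnu c b * cnu (c - b) a := by
  classical
  unfold cnu
  by_cases hb : b ≤ c
  · by_cases ha : a ≤ c - b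
    · have h : a + b ≤ c := (le_tsub_iff_right hb).mp ha
      simp [hb, ha, h]
    · have h : ¬ a + b ≤ c := fun h => ha ((le_tsub_iff_right hb).mpr h)
      simp [hb, ha, h]
  · have h : ¬ a + b ≤ c := fun h => hb (le_trans le_add_self h)
    simp [hb, h]

/-- The contraction action `α ∘ f`. -/
noncomputable def cAct (α f : MvPolynomial σ K) : MvPolynomial σ K :=
  genAct cnu α f

/-- The annihilator `Ann(f)` of `f` under the contraction action, as an ideal. -/
noncomputable def cAnn (f : MvPolynomial σ K) : Ideal (MvPolynomial σ K) :=
  annG cnu cnu_mul f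

theorem mem_cAnn {f α : MvPolynomial σ K} : α ∈ cAnn f ↔ cAct α f = 0 := Iff.rfl

/-- The `K`-submodule of polynomials all of whose monomials satisfy `P`. -/
noncomputable def bihom (K : Type*) [CommSemiring K] {σ : Type*} (P : (σ →₀ ℕ) → Prop) :
    Submodule K (MvPolynomial σ K) where
  carrier := {p | ∀ c ∈ p.support, P c}
  zero_mem' := by
    intro c hc
    simp at hc
  add_mem' := by
    classical
    intro p q hp hq c hc
    rcases Finset.mem_union.mp (MvPolynomial.support_add hc) with h | h
    · exact hp c h
    · exact hq c h
  smul_mem' := by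
    intro k p hp c hc
    exact hp c (MvPolynomial.support_smul hc)

/-- The x-degree of an exponent vector. -/
def degX {n m : ℕ} (c : (Fin (n + 1) ⊕ Fin m) →₀ ℕ) : ℕ := ∑ r, c (Sum.inl r)

/-- The u-degree of an exponent vector. -/
def degU {n m : ℕ} (c : (Fin (n + 1) ⊕ Fin m) →₀ ℕ) : ℕ := ∑ k, c (Sum.inr k)

/-- The bihomogeneous component `T_(i,j)`. -/
noncomputable def Tbi (K : Type*) [CommSemiring K] {n m : ℕ} (i j : ℕ) :
    Submodule K (MvPolynomial (Fin (n + 1) ⊕ Fin m) K) :=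
  bihom K fun c => degX c = i ∧ degU c = j

/-- The bigraded component `A_(i,j)` of `A = T ⧸ Ann(f)`: the image of `T_(i,j)`
in the quotient. -/
noncomputable def Abi {K : Type*} [Field K] {n m : ℕ}
    (f : MvPolynomial (Fin (n + 1) ⊕ Fin m) K) (i j : ℕ) :
    Submodule K (MvPolynomial (Fin (n + 1) ⊕ Fin m) K ⧸ cAnn f) :=
  (Tbi K i j).map (Ideal.Quotient.mkₐ K (cAnn f)).toLinearMap

/-! ### Auxiliary development for `stmt_4` -/

section StmtFourAux

theorem genAct_sum_right' (ν : (σ →₀ ℕ) → (σ →₀ ℕ) → K) (α : MvPolynomial σ K)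
    {ι : Type*} (s : Finset ι) (h : ι → MvPolynomial σ K) :
    genAct ν α (∑ i ∈ s, h i) = ∑ i ∈ s, genAct ν α (h i) := by
  classical
  induction s using Finset.induction_on with
  | empty => simpa using genAct_zero_right ν α
  | insert _ _ hx ih => rw [Finset.sum_insert hx, Finset.sum_insert hx, genAct_add_right, ih]

theorem genAct_sum_left' (ν : (σ →₀ ℕ) → (σ →₀ ℕ) → K) {ι : Type*} (s : Finset ι)
    (h : ι → MvPolynomial σ K) (f : MvPolynomial σ K) :
    genAct ν (∑ i ∈ s, h i) f = ∑ i ∈ s, genAct ν (h i) f := by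
  classical
  induction s using Finset.induction_on with
  | empty => simpa using genAct_zero_left ν f
  | insert _ _ hx ih => rw [Finset.sum_insert hx, Finset.sum_insert hx, genAct_add_left, ih]

theorem coeff_cAct_monomial (α : MvPolynomial σ K) (e w : σ →₀ ℕ) :
    coeff w (cAct α (monomial e 1)) = if w ≤ e then coeff (e - w) α else 0 := by
  classical
  have h1 : cAct α (monomial e 1) = Finsupp.sum (AddMonoidAlgebra.coeff α) fun a ca => monomial (e - a) (cnu e a * ca) := by
    unfold cAct genAct
    apply Finsupp.sum_congr
    intro a _
    rw [← single_eq_monomial, AddMonoidAlgebra.coeff_single, Finsupp.sum_single_index (by simp)]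
    rw [mul_one]
  rw [h1, Finsupp.sum, coeff_sum]
  by_cases hw : w ≤ e
  · rw [if_pos hw]
    rw [Finset.sum_eq_single (e - w)]
    · rw [coeff_monomial, if_pos (tsub_tsub_cancel_of_le hw)]
      have : cnu (K := K) e (e - w) = 1 := by unfold cnu; rw [if_pos tsub_le_self]
      rw [this, one_mul]
      rfl
    · intro b _ hne
      rw [coeff_monomial]
      split_ifs with h
      · by_cases hb : b ≤ e
        · exact absurd (by rw [← h, tsub_tsub_cancel_of_le hb]) hne
        · have : cnu (K := K) e b = 0 := by unfold cnu; rw [if_neg hb]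
          rw [this, zero_mul]
      · rfl
    · intro h
      have h2 : coeff (e - w) α = 0 := Finsupp.notMem_support_iff.mp h
      show coeff w (monomial (e - (e - w)) (cnu e (e - w) * coeff (e - w) α)) = 0
      rw [h2, mul_zero, map_zero, coeff_zero]
  · rw [if_neg hw]
    apply Finset.sum_eq_zero
    intro b _
    rw [coeff_monomial]
    split_ifs with h
    · by_cases hb : b ≤ e
      · exact absurd (h ▸ tsub_le_self) hw
      · have : cnu (K := K) e b = 0 := by unfold cnu; rw [if_neg hb]
        rw [this, zero_mul]
    · rfl

theorem cAct_monomial_monomial (a e : σ →₀ ℕ) (c : K) :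
    cAct (monomial a c) (monomial e 1) = if a ≤ e then monomial (e - a) c else 0 := by
  classical
  show genAct cnu (monomial a c) (monomial e 1) = _
  rw [genAct_monomial]
  unfold cnu
  split_ifs with h
  · rw [one_mul, mul_one]
  · rw [zero_mul, map_zero]

variable {n m : ℕ}

/-- The exponent of the `r`-th monomial of the CW-Nagata polynomial. -/
noncomputable def EE (d₁ : ℕ) (g : Fin (n + 1) → (Fin m →₀ ℕ)) (r : Fin (n + 1)) :
    (Fin (n + 1) ⊕ Fin m) →₀ ℕ :=
  Finsupp.single (Sum.inl r) d₁ + (g r).mapDomain Sum.inr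

theorem mapInr_inl (b : Fin m →₀ ℕ) (s : Fin (n + 1)) :
    Finsupp.mapDomain (Sum.inr : Fin m → Fin (n + 1) ⊕ Fin m) b (Sum.inl s) = 0 :=
  Finsupp.mapDomain_notin_range _ _ (by simp)

theorem mapInr_inr (b : Fin m →₀ ℕ) (k : Fin m) :
    Finsupp.mapDomain (Sum.inr : Fin m → Fin (n + 1) ⊕ Fin m) b (Sum.inr k) = b k :=
  Finsupp.mapDomain_apply Sum.inr_injective _ _

theorem EE_inl (d₁ : ℕ) (g : Fin (n + 1) → (Fin m →₀ ℕ)) (r s : Fin (n + 1)) :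
    EE d₁ g r (Sum.inl s) = if r = s then d₁ else 0 := by
  classical
  rw [EE, Finsupp.add_apply, mapInr_inl, add_zero, Finsupp.single_apply]
  simp

theorem EE_inr (d₁ : ℕ) (g : Fin (n + 1) → (Fin m →₀ ℕ)) (r : Fin (n + 1)) (k : Fin m) :
    EE d₁ g r (Sum.inr k) = g r k := by
  classical
  rw [EE, Finsupp.add_apply, Finsupp.single_apply, mapInr_inr]
  simp

theorem le_EE_iff {d₁ : ℕ} {g : Fin (n + 1) → (Fin m →₀ ℕ)}
    {a : (Fin (n + 1) ⊕ Fin m) →₀ ℕ} {r : Fin (n + 1)} :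
    a ≤ EE d₁ g r ↔
      (∀ s, r ≠ s → a (Sum.inl s) = 0) ∧ a (Sum.inl r) ≤ d₁ ∧ ∀ k, a (Sum.inr k) ≤ g r k := by
  rw [Finsupp.le_def, Sum.forall]
  constructor
  · rintro ⟨hl, hr⟩
    refine ⟨fun s hs => ?_, ?_, fun k => by have := hr k; rwa [EE_inr] at this⟩
    · have := hl s; rw [EE_inl, if_neg hs] at this; omega
    · have := hl r; rwa [EE_inl, if_pos rfl] at this
  · rintro ⟨h0, hd, hu⟩
    refine ⟨fun s => ?_, fun k => by rw [EE_inr]; exact hu k⟩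
    rw [EE_inl]
    by_cases hs : r = s
    · rw [if_pos hs, ← hs]; exact hd
    · rw [if_neg hs, h0 s hs]

theorem mapInr_le_EE_iff {d₁ : ℕ} {g : Fin (n + 1) → (Fin m →₀ ℕ)}
    {w : Fin m →₀ ℕ} {r : Fin (n + 1)} :
    Finsupp.mapDomain Sum.inr w ≤ EE d₁ g r ↔ w ≤ g r := by
  rw [le_EE_iff, Finsupp.le_def]
  simp [mapInr_inl, mapInr_inr]

theorem cAct_monomial_f (d₁ : ℕ) (g : Fin (n + 1) → (Fin m →₀ ℕ))
    (a : (Fin (n + 1) ⊕ Fin m) →₀ ℕ) (c : K) :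
    cAct (monomial a c) (∑ r, monomial (EE d₁ g r) (1 : K)) =
      ∑ r, if a ≤ EE d₁ g r then monomial (EE d₁ g r - a) c else 0 := by
  show genAct cnu _ _ = _
  rw [genAct_sum_right']
  exact Finset.sum_congr rfl fun r _ => cAct_monomial_monomial a (EE d₁ g r) c

theorem coeff_cAct_f (d₁ : ℕ) (g : Fin (n + 1) → (Fin m →₀ ℕ))
    (α : MvPolynomial (Fin (n + 1) ⊕ Fin m) K) (w : (Fin (n + 1) ⊕ Fin m) →₀ ℕ) :
    coeff w (cAct α (∑ r, monomial (EE d₁ g r) (1 : K))) =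
      ∑ r, if w ≤ EE d₁ g r then coeff (EE d₁ g r - w) α else 0 := by
  have h1 : cAct α (∑ r, monomial (EE d₁ g r) (1 : K)) =
      ∑ r, cAct α (monomial (EE d₁ g r) (1 : K)) := genAct_sum_right' _ _ _ _
  rw [h1, coeff_sum]
  exact Finset.sum_congr rfl fun r _ => coeff_cAct_monomial α (EE d₁ g r) w

theorem ann_coeff {d₁ : ℕ} {g : Fin (n + 1) → (Fin m →₀ ℕ)}
    {α : MvPolynomial (Fin (n + 1) ⊕ Fin m) K}
    (hα : α ∈ cAnn (∑ r, monomial (EE d₁ g r) (1 : K))) (w : (Fin (n + 1) ⊕ Fin m) →₀ ℕ) :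
    (∑ r, if w ≤ EE d₁ g r then coeff (EE d₁ g r - w) α else 0) = 0 := by
  have h := mem_cAnn.mp hα
  have h2 := congrArg (coeff w) h
  rw [coeff_cAct_f] at h2
  simpa using h2

theorem XX_eq (i j : σ) :
    (X i * X j : MvPolynomial σ K) = monomial (Finsupp.single i 1 + Finsupp.single j 1) 1 := by
  rw [← pow_one (X i), ← pow_one (X j), X_pow_eq_monomial, X_pow_eq_monomial, monomial_mul,
    one_mul]

theorem X_mul_monomial_eq (i : σ) (t : σ →₀ ℕ) (c : K) :
    X i * monomial t c = monomial (Finsupp.single i 1 + t) c := by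
  rw [← pow_one (X i), X_pow_eq_monomial, monomial_mul, one_mul]

theorem Xpow_mul_monomial_eq (i : σ) (d : ℕ) (t : σ →₀ ℕ) (c : K) :
    X i ^ d * monomial t c = monomial (Finsupp.single i d + t) c := by
  rw [X_pow_eq_monomial, monomial_mul, one_mul]

theorem monomial_mem_span_of_le {G : Set (MvPolynomial σ K)} {b : σ →₀ ℕ}
    (hb : monomial b (1 : K) ∈ G) {a : σ →₀ ℕ} (hba : b ≤ a) (c : K) :
    monomial a c ∈ Ideal.span G := by
  have h : monomial a c = monomial (a - b) c * monomial b 1 := by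
    rw [monomial_mul, mul_one, tsub_add_cancel_of_le hba]
  rw [h]
  exact Ideal.mul_mem_left _ _ (Ideal.subset_span hb)

theorem exists_min {P : (Fin m →₀ ℕ) → Prop} (a : Fin m →₀ ℕ) (ha : P a) :
    ∃ t, t ≤ a ∧ P t ∧ ∀ t' < t, ¬ P t' := by
  obtain ⟨t, ⟨hta, hPt⟩, hmin⟩ :=
    (IsWellFounded.wf : WellFounded ((· < ·) : (Fin m →₀ ℕ) → (Fin m →₀ ℕ) → Prop)).has_min
      {t | t ≤ a ∧ P t} ⟨a, le_rfl, ha⟩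
  exact ⟨t, hta, hPt, fun t' h hP => hmin t' ⟨h.le.trans hta, hP⟩ h⟩

theorem exists_le_sum_eq (b : Fin m →₀ ℕ) (N : ℕ) (h : N ≤ ∑ k, b k) :
    ∃ s ≤ b, (∑ k, s k) = N := by
  classical
  induction N with
  | zero => exact ⟨0, zero_le, by simp⟩
  | succ N ih =>
    obtain ⟨s, hsb, hsum⟩ := ih (by omega)
    have hne : s ≠ b := by
      rintro rfl
      omega
    have hex : ∃ i, s i < b i := by
      by_contra hcon
      push_neg at hcon
      exact hne (le_antisymm hsb (Finsupp.le_def.mpr hcon))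
    obtain ⟨i, hi⟩ := hex
    refine ⟨s + Finsupp.single i 1, ?_, ?_⟩
    · rw [Finsupp.le_def]
      intro j
      rw [Finsupp.add_apply, Finsupp.single_apply]
      rcases eq_or_ne i j with rfl | hij
      · rw [if_pos rfl]; omega
      · rw [if_neg hij]
        have := Finsupp.le_def.mp hsb j
        omega
    · have : (∑ k, (s + Finsupp.single i 1 : Fin m →₀ ℕ) k) = (∑ k, s k) + ∑ k, Finsupp.single i 1 k := by
        rw [← Finset.sum_add_distrib]
        exact Finset.sum_congr rfl fun k _ => Finsupp.add_apply s (Finsupp.single i 1) k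
      rw [this, hsum]
      simp [Finsupp.single_apply]

end StmtFourAux


section StmtFourMain

open Finsupp in
/-- The generating set of `Ann(f)` from Statement 4. -/
def genSet (K : Type*) [CommRing K] (n m d₁ d₂ : ℕ) (g : Fin (n + 1) → (Fin m →₀ ℕ)) :
    Set (MvPolynomial (Fin (n + 1) ⊕ Fin m) K) :=
  {α : MvPolynomial (Fin (n + 1) ⊕ Fin m) K |
      (∃ i j : Fin (n + 1), i < j ∧ α = X (Sum.inl i) * X (Sum.inl j)) ∨
      (∃ k : Fin (n + 1), α = X (Sum.inl k) ^ (d₁ + 1)) ∨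
      (∃ s : Fin m →₀ ℕ, (∑ k, s k) = d₂ + 1 ∧
        α = monomial (s.mapDomain Sum.inr) 1) ∨
      (∃ s : Fin m →₀ ℕ, 1 ≤ (∑ k, s k) ∧ (∑ k, s k) ≤ d₂ ∧
        (∀ r, ¬ s ≤ g r) ∧ (∀ t, t < s → ∃ r, t ≤ g r) ∧
        α = monomial (s.mapDomain Sum.inr) 1) ∨
      (∃ (r : Fin (n + 1)) (i : Fin m), g r i = 0 ∧
        α = X (Sum.inl r) * X (Sum.inr i)) ∨
      (∃ (r : Fin (n + 1)) (t : Fin m →₀ ℕ), 1 ≤ (∑ k, t k) ∧ (∑ k, t k) ≤ d₂ ∧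
        ¬ t ≤ g r ∧ (∀ t', t' < t → t' ≤ g r) ∧
        α = X (Sum.inl r) * monomial (t.mapDomain Sum.inr) 1) ∨
      (∃ (r s : Fin (n + 1)) (ρ τ : Fin m →₀ ℕ), (∑ k, ρ k) = (∑ k, τ k) ∧
        g r = ρ + (g r ⊓ g s) ∧ g s = τ + (g r ⊓ g s) ∧
        α = X (Sum.inl r) ^ d₁ * monomial (ρ.mapDomain Sum.inr) 1 -
            X (Sum.inl s) ^ d₁ * monomial (τ.mapDomain Sum.inr) 1)}

variable {K : Type*} [Field K] {n m : ℕ}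

theorem monomial_not_dominated_mem {d₁ d₂ : ℕ} (hd₁ : 1 ≤ d₁)
    (g : Fin (n + 1) → (Fin m →₀ ℕ)) (hgdeg : ∀ r, (∑ k, g r k) = d₂)
    (a : (Fin (n + 1) ⊕ Fin m) →₀ ℕ) (h : ∀ r, ¬ a ≤ EE d₁ g r) (c : K) :
    monomial a c ∈ Ideal.span (genSet K n m d₁ d₂ g) := by
  classical
  by_cases hA : ∃ i j : Fin (n + 1), i ≠ j ∧ a (Sum.inl i) ≠ 0 ∧ a (Sum.inl j) ≠ 0
  · obtain ⟨i, j, hij, hi, hj⟩ := hA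
    have key : ∀ i j : Fin (n + 1), i < j → a (Sum.inl i) ≠ 0 → a (Sum.inl j) ≠ 0 →
        monomial a c ∈ Ideal.span (genSet K n m d₁ d₂ g) := by
      intro i j hlt hi hj
      apply monomial_mem_span_of_le
        (b := Finsupp.single (Sum.inl i) 1 + Finsupp.single (Sum.inl j) 1)
      · exact Or.inl ⟨i, j, hlt, (XX_eq _ _).symm⟩
      · rw [Finsupp.le_def]
        rintro (s | k)
        · rw [Finsupp.add_apply, Finsupp.single_apply, Finsupp.single_apply]
          rcases eq_or_ne s i with rfl | hsi
          · rw [if_pos rfl, if_neg (by simp [hlt.ne'])]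
            omega
          · rcases eq_or_ne s j with rfl | hsj
            · rw [if_neg (by simp [hsi.symm]), if_pos rfl]
              omega
            · rw [if_neg (by simp [hsi.symm]), if_neg (by simp [hsj.symm])]
              omega
        · simp [Finsupp.single_apply]
    rcases hij.lt_or_gt with h' | h'
    · exact key i j h' hi hj
    · exact key j i h' hj hi
  push_neg at hA
  by_cases hB : ∃ k, d₁ + 1 ≤ a (Sum.inl k)
  · obtain ⟨k, hk⟩ := hB
    apply monomial_mem_span_of_le (b := Finsupp.single (Sum.inl k) (d₁ + 1))
    · exact Or.inr (Or.inl ⟨k, X_pow_eq_monomial.symm⟩)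
    · exact Finsupp.single_le_iff.mpr hk
  push_neg at hB
  set aU : Fin m →₀ ℕ := Finsupp.comapDomain Sum.inr a Sum.inr_injective.injOn with haUdef
  have haUk : ∀ k, aU k = a (Sum.inr k) := fun k => rfl
  have hmaple : ∀ t : Fin m →₀ ℕ, t ≤ aU → Finsupp.mapDomain Sum.inr t ≤ a := by
    intro t ht
    rw [Finsupp.le_def]
    rintro (s | k)
    · rw [mapInr_inl]; exact Nat.zero_le _
    · rw [mapInr_inr]
      exact Finsupp.le_def.mp ht k
  by_cases hC : ∃ r, a (Sum.inl r) ≠ 0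
  · obtain ⟨r, hr⟩ := hC
    have hzero : ∀ s, r ≠ s → a (Sum.inl s) = 0 := fun s hs => hA r s hs hr
    have hnotle : ¬ aU ≤ g r := by
      intro hle
      apply h r
      rw [le_EE_iff]
      exact ⟨hzero, by have := hB r; omega, fun k => Finsupp.le_def.mp hle k⟩
    by_cases hdeg : (∑ k, aU k) ≤ d₂
    · obtain ⟨t, htaU, htP, htmin⟩ := exists_min (P := fun s => ¬ s ≤ g r) aU hnotle
      have ht0 : t ≠ 0 := by rintro rfl; exact htP zero_le
      have hk0 : ∃ k0, t k0 ≠ 0 := by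
        by_contra hcon
        push_neg at hcon
        exact ht0 (Finsupp.ext hcon)
      obtain ⟨k0, hk0⟩ := hk0
      have hsum1 : 1 ≤ ∑ k, t k :=
        le_trans (Nat.one_le_iff_ne_zero.mpr hk0)
          (Finset.single_le_sum (fun _ _ => Nat.zero_le _) (Finset.mem_univ k0))
      have hsum2 : (∑ k, t k) ≤ d₂ :=
        le_trans (Finset.sum_le_sum fun k _ => Finsupp.le_def.mp htaU k) hdeg
      apply monomial_mem_span_of_le
        (b := Finsupp.single (Sum.inl r) 1 + Finsupp.mapDomain Sum.inr t)
      · refine Or.inr (Or.inr (Or.inr (Or.inr (Or.inr (Or.inl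
          ⟨r, t, hsum1, hsum2, htP, fun t' h' => not_not.mp (htmin t' h'),
            (X_mul_monomial_eq _ _ _).symm⟩)))))
      · rw [Finsupp.le_def]
        rintro (s | k)
        · rw [Finsupp.add_apply, Finsupp.single_apply, mapInr_inl, add_zero]
          split_ifs with hh
          · rcases Sum.inl.inj hh with rfl
            omega
          · exact Nat.zero_le _
        · rw [Finsupp.add_apply, Finsupp.single_apply, if_neg (by simp), zero_add, mapInr_inr]
          exact Finsupp.le_def.mp htaU k
    · push_neg at hdeg
      obtain ⟨s, hsle, hssum⟩ := exists_le_sum_eq aU (d₂ + 1) hdeg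
      apply monomial_mem_span_of_le (b := Finsupp.mapDomain Sum.inr s)
      · exact Or.inr (Or.inr (Or.inl ⟨s, hssum, rfl⟩))
      · exact hmaple s hsle
  · push_neg at hC
    have hnotle : ∀ r, ¬ aU ≤ g r := by
      intro r hle
      apply h r
      rw [le_EE_iff]
      exact ⟨fun s _ => hC s, by rw [hC r]; exact Nat.zero_le _,
        fun k => Finsupp.le_def.mp hle k⟩
    by_cases hdeg : (∑ k, aU k) ≤ d₂
    · obtain ⟨t, htaU, htP, htmin⟩ := exists_min (P := fun s => ∀ r, ¬ s ≤ g r) aU hnotle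
      have ht0 : t ≠ 0 := by rintro rfl; exact htP 0 zero_le
      have hk0 : ∃ k0, t k0 ≠ 0 := by
        by_contra hcon
        push_neg at hcon
        exact ht0 (Finsupp.ext hcon)
      obtain ⟨k0, hk0⟩ := hk0
      have hsum1 : 1 ≤ ∑ k, t k :=
        le_trans (Nat.one_le_iff_ne_zero.mpr hk0)
          (Finset.single_le_sum (fun _ _ => Nat.zero_le _) (Finset.mem_univ k0))
      have hsum2 : (∑ k, t k) ≤ d₂ :=
        le_trans (Finset.sum_le_sum fun k _ => Finsupp.le_def.mp htaU k) hdeg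
      apply monomial_mem_span_of_le (b := Finsupp.mapDomain Sum.inr t)
      · refine Or.inr (Or.inr (Or.inr (Or.inl ⟨t, hsum1, hsum2, htP, fun t' h' => ?_, rfl⟩)))
        have h2 := htmin t' h'
        push_neg at h2
        exact h2
      · exact hmaple t htaU
    · push_neg at hdeg
      obtain ⟨s, hsle, hssum⟩ := exists_le_sum_eq aU (d₂ + 1) hdeg
      apply monomial_mem_span_of_le (b := Finsupp.mapDomain Sum.inr s)
      · exact Or.inr (Or.inr (Or.inl ⟨s, hssum, rfl⟩))
      · exact hmaple s hsle

theorem expo_eq (d₁ : ℕ) (g : Fin (n + 1) → (Fin m →₀ ℕ)) (r : Fin (n + 1))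
    (w i : Fin m →₀ ℕ) (hwi : w ≤ i) (hir : i ≤ g r) :
    Finsupp.mapDomain (Sum.inr : Fin m → Fin (n + 1) ⊕ Fin m) (i - w) +
        (Finsupp.single (Sum.inl r) d₁ + Finsupp.mapDomain Sum.inr (g r - i)) =
      EE d₁ g r - Finsupp.mapDomain Sum.inr w := by
  classical
  ext x
  rcases x with s | k
  · rw [Finsupp.add_apply, Finsupp.add_apply, Finsupp.tsub_apply, mapInr_inl, mapInr_inl,
      mapInr_inl, EE_inl, Finsupp.single_apply]
    simp
  · rw [Finsupp.add_apply, Finsupp.add_apply, Finsupp.tsub_apply, mapInr_inr, mapInr_inr,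
      mapInr_inr, EE_inr, Finsupp.single_apply, if_neg (by simp), Finsupp.tsub_apply,
      Finsupp.tsub_apply]
    have h1 := Finsupp.le_def.mp hwi k
    have h2 := Finsupp.le_def.mp hir k
    omega

theorem diff_mem {d₁ d₂ : ℕ} (g : Fin (n + 1) → (Fin m →₀ ℕ))
    (hgdeg : ∀ r, (∑ k, g r k) = d₂) (r s : Fin (n + 1)) (w : Fin m →₀ ℕ)
    (hwr : w ≤ g r) (hws : w ≤ g s) :
    monomial (EE d₁ g r - Finsupp.mapDomain Sum.inr w) (1 : K) -
        monomial (EE d₁ g s - Finsupp.mapDomain Sum.inr w) 1 ∈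
      Ideal.span (genSet K n m d₁ d₂ g) := by
  classical
  set i : Fin m →₀ ℕ := g r ⊓ g s with hidef
  have hir : i ≤ g r := inf_le_left
  have his : i ≤ g s := inf_le_right
  have hwi : w ≤ i := le_inf hwr hws
  have hρ : g r = (g r - i) + i := by
    ext k
    have := Finsupp.le_def.mp hir k
    rw [Finsupp.add_apply, Finsupp.tsub_apply]
    omega
  have hτ : g s = (g s - i) + i := by
    ext k
    have := Finsupp.le_def.mp his k
    rw [Finsupp.add_apply, Finsupp.tsub_apply]
    omega
  have hdeg : (∑ k, (g r - i) k) = ∑ k, (g s - i) k := by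
    have h1 := congrArg (fun v : Fin m →₀ ℕ => ∑ k, v k) hρ
    have h2 := congrArg (fun v : Fin m →₀ ℕ => ∑ k, v k) hτ
    simp only [Finsupp.add_apply, Finset.sum_add_distrib, hgdeg] at h1 h2
    omega
  have hmem : (X (Sum.inl r) ^ d₁ * monomial ((g r - i).mapDomain Sum.inr) 1 -
      X (Sum.inl s) ^ d₁ * monomial ((g s - i).mapDomain Sum.inr) 1 :
        MvPolynomial (Fin (n + 1) ⊕ Fin m) K) ∈ genSet K n m d₁ d₂ g := by
    refine Or.inr (Or.inr (Or.inr (Or.inr (Or.inr (Or.inr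
      ⟨r, s, g r - i, g s - i, hdeg, ?_, ?_, rfl⟩)))))
    · rw [← hidef]; exact hρ
    · rw [← hidef]; exact hτ
  have key : monomial (EE d₁ g r - Finsupp.mapDomain Sum.inr w) (1 : K) -
      monomial (EE d₁ g s - Finsupp.mapDomain Sum.inr w) 1 =
      monomial (Finsupp.mapDomain Sum.inr (i - w)) 1 *
        (X (Sum.inl r) ^ d₁ * monomial ((g r - i).mapDomain Sum.inr) 1 -
         X (Sum.inl s) ^ d₁ * monomial ((g s - i).mapDomain Sum.inr) 1) := by
    rw [mul_sub, Xpow_mul_monomial_eq, Xpow_mul_monomial_eq, monomial_mul, monomial_mul,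
      one_mul, expo_eq d₁ g r w i hwi hir, expo_eq d₁ g s w i hwi his]
  rw [key]
  exact Ideal.mul_mem_left _ _ (Ideal.subset_span hmem)

theorem cAct_sub (α β f : MvPolynomial (Fin (n + 1) ⊕ Fin m) K) :
    cAct (α - β) f = cAct α f - cAct β f := by
  have h : α = (α - β) + β := by ring
  have h2 : cAct α f = cAct (α - β) f + cAct β f := by
    conv_lhs => rw [h]
    exact genAct_add_left _ _ _ _
  rw [h2]
  ring

theorem cAct_gen6_half {d₁ : ℕ} (hd₁ : 1 ≤ d₁) (g : Fin (n + 1) → (Fin m →₀ ℕ))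
    (r : Fin (n + 1)) (ρ i : Fin m →₀ ℕ) (hsplit : g r = ρ + i) :
    cAct (X (Sum.inl r) ^ d₁ * monomial (Finsupp.mapDomain Sum.inr ρ) (1 : K))
        (∑ t, monomial (EE d₁ g t) (1 : K)) =
      monomial (Finsupp.mapDomain Sum.inr i) 1 := by
  classical
  have happ : ∀ k, g r k = ρ k + i k := by
    intro k
    have := DFunLike.congr_fun hsplit k
    rwa [Finsupp.add_apply] at this
  rw [Xpow_mul_monomial_eq, cAct_monomial_f]
  have hle : Finsupp.single (Sum.inl r) d₁ + Finsupp.mapDomain Sum.inr ρ ≤ EE d₁ g r := by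
    rw [Finsupp.le_def]
    rintro (s | k)
    · rw [Finsupp.add_apply, mapInr_inl, add_zero, EE_inl, Finsupp.single_apply]
      split_ifs <;> first | omega | simp_all
    · rw [Finsupp.add_apply, Finsupp.single_apply, if_neg (by simp), zero_add, mapInr_inr,
        EE_inr, happ k]
      omega
  rw [Finset.sum_eq_single_of_mem r (Finset.mem_univ r)]
  · rw [if_pos hle]
    have hexp : EE d₁ g r - (Finsupp.single (Sum.inl r) d₁ + Finsupp.mapDomain Sum.inr ρ) =
        Finsupp.mapDomain Sum.inr i := by
      ext x
      rcases x with s | k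
      · rw [Finsupp.tsub_apply, EE_inl, Finsupp.add_apply, Finsupp.single_apply, mapInr_inl,
          mapInr_inl, add_zero]
        split_ifs <;> first | omega | simp_all
      · rw [Finsupp.tsub_apply, EE_inr, Finsupp.add_apply, Finsupp.single_apply,
          if_neg (by simp), zero_add, mapInr_inr, mapInr_inr, happ k]
        omega
    rw [hexp]
  · intro t _ hne
    rw [if_neg]
    intro hcon
    have h2 := Finsupp.le_def.mp hcon (Sum.inl r)
    rw [Finsupp.add_apply, mapInr_inl, add_zero, Finsupp.single_apply, if_pos rfl, EE_inl,
      if_neg hne] at h2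
    omega

theorem span_le_ann {d₁ d₂ : ℕ} (hd₁ : 1 ≤ d₁) (g : Fin (n + 1) → (Fin m →₀ ℕ))
    (hgdeg : ∀ r, (∑ k, g r k) = d₂) :
    Ideal.span (genSet K n m d₁ d₂ g) ≤ cAnn (∑ r, monomial (EE d₁ g r) (1 : K)) := by
  classical
  rw [Ideal.span_le]
  rintro α hα
  rw [SetLike.mem_coe, mem_cAnn]
  rcases hα with ⟨i, j, hij, rfl⟩ | ⟨k, rfl⟩ | ⟨s, hs, rfl⟩ | ⟨s, _, _, hs3, _, rfl⟩ |
    ⟨r, i, hri, rfl⟩ | ⟨r, t, _, _, ht3, _, rfl⟩ | ⟨r, s, ρ, τ, _, h2, h3, rfl⟩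
  · rw [XX_eq, cAct_monomial_f]
    apply Finset.sum_eq_zero
    intro t _
    rw [if_neg]
    intro hle
    rcases eq_or_ne t i with rfl | hti
    · have h2 := Finsupp.le_def.mp hle (Sum.inl j)
      rw [EE_inl, if_neg hij.ne, Finsupp.add_apply, Finsupp.single_apply, Finsupp.single_apply,
        if_pos rfl, if_neg (by simp [hij.ne])] at h2
      omega
    · have h2 := Finsupp.le_def.mp hle (Sum.inl i)
      rw [EE_inl, if_neg hti, Finsupp.add_apply, Finsupp.single_apply, Finsupp.single_apply,
        if_pos rfl] at h2
      omega
  · rw [X_pow_eq_monomial, cAct_monomial_f]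
    apply Finset.sum_eq_zero
    intro t _
    rw [if_neg]
    intro hle
    have h2 := Finsupp.le_def.mp hle (Sum.inl k)
    rw [EE_inl, Finsupp.single_apply, if_pos rfl] at h2
    split_ifs at h2 <;> omega
  · rw [cAct_monomial_f]
    apply Finset.sum_eq_zero
    intro t _
    rw [if_neg]
    intro hle
    have h2 := mapInr_le_EE_iff.mp hle
    have h3 : (∑ k, s k) ≤ ∑ k, g t k := Finset.sum_le_sum fun k _ => Finsupp.le_def.mp h2 k
    rw [hgdeg t, hs] at h3
    omega
  · rw [cAct_monomial_f]
    apply Finset.sum_eq_zero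
    intro t _
    rw [if_neg]
    intro hle
    exact hs3 t (mapInr_le_EE_iff.mp hle)
  · rw [XX_eq, cAct_monomial_f]
    apply Finset.sum_eq_zero
    intro t _
    rw [if_neg]
    intro hle
    rcases eq_or_ne t r with rfl | htr
    · have h2 := Finsupp.le_def.mp hle (Sum.inr i)
      rw [EE_inr, hri, Finsupp.add_apply, Finsupp.single_apply, Finsupp.single_apply,
        if_neg (by simp), if_pos rfl] at h2
      omega
    · have h2 := Finsupp.le_def.mp hle (Sum.inl r)
      rw [EE_inl, if_neg htr, Finsupp.add_apply, Finsupp.single_apply, Finsupp.single_apply,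
        if_pos rfl, if_neg (by simp)] at h2
      omega
  · rw [X_mul_monomial_eq, cAct_monomial_f]
    apply Finset.sum_eq_zero
    intro t' _
    rw [if_neg]
    intro hle
    rcases eq_or_ne t' r with rfl | htr
    · apply ht3
      rw [Finsupp.le_def]
      intro k
      have h2 := Finsupp.le_def.mp hle (Sum.inr k)
      rwa [EE_inr, Finsupp.add_apply, Finsupp.single_apply, if_neg (by simp), zero_add,
        mapInr_inr] at h2
    · have h2 := Finsupp.le_def.mp hle (Sum.inl r)
      rw [EE_inl, if_neg htr, Finsupp.add_apply, Finsupp.single_apply, if_pos rfl,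
        mapInr_inl, add_zero] at h2
      omega
  · rw [cAct_sub, cAct_gen6_half hd₁ g r ρ (g r ⊓ g s) h2,
      cAct_gen6_half hd₁ g s τ (g r ⊓ g s) ?_, sub_self]
    rw [inf_comm] at h3
    · rw [inf_comm]; exact h3

theorem ann_le_span {d₁ d₂ : ℕ} (hd₁ : 1 ≤ d₁) (g : Fin (n + 1) → (Fin m →₀ ℕ))
    (hgdeg : ∀ r, (∑ k, g r k) = d₂) :
    ∀ (N : ℕ) (α : MvPolynomial (Fin (n + 1) ⊕ Fin m) K), α.support.card ≤ N →
      α ∈ cAnn (∑ r, monomial (EE d₁ g r) (1 : K)) →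
      α ∈ Ideal.span (genSet K n m d₁ d₂ g) := by
  classical
  intro N
  induction N with
  | zero =>
    intro α hcard _
    have h0 : α = 0 := by
      rwa [Nat.le_zero, Finset.card_eq_zero, MvPolynomial.support_eq_empty] at hcard
    rw [h0]
    exact Ideal.zero_mem _
  | succ N ih =>
    intro α hcard hα
    rcases Finset.eq_empty_or_nonempty α.support with hsupp | ⟨a, ha⟩
    · rw [MvPolynomial.support_eq_empty.mp hsupp]
      exact Ideal.zero_mem _
    have hca : coeff a α ≠ 0 := MvPolynomial.mem_support_iff.mp ha
    by_cases h1 : ∀ r, ¬ a ≤ EE d₁ g r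
    · have hmono_ann : (monomial a (coeff a α)) ∈ cAnn (∑ r, monomial (EE d₁ g r) (1 : K)) := by
        rw [mem_cAnn, cAct_monomial_f]
        exact Finset.sum_eq_zero fun r _ => if_neg (h1 r)
      have hmono_span := monomial_not_dominated_mem hd₁ g hgdeg a h1 (coeff a α)
      have hsub : α - monomial a (coeff a α) ∈ cAnn (∑ r, monomial (EE d₁ g r) (1 : K)) :=
        sub_mem hα hmono_ann
      have hsupp' : (α - monomial a (coeff a α)).support ⊆ α.support.erase a := by
        intro b hb
        have hb' := MvPolynomial.mem_support_iff.mp hb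
        rw [Finset.mem_erase]
        have hne : b ≠ a := by
          rintro rfl
          exact hb' (by rw [MvPolynomial.coeff_sub, coeff_monomial, if_pos rfl, sub_self])
        refine ⟨hne, MvPolynomial.mem_support_iff.mpr fun h0 => hb' ?_⟩
        rw [MvPolynomial.coeff_sub, h0, coeff_monomial, if_neg fun hh => hne hh.symm, sub_zero]
      have hcard' : (α - monomial a (coeff a α)).support.card ≤ N :=
        le_trans (Finset.card_le_card hsupp')
          (by rw [Finset.card_erase_of_mem ha]; omega)
      have hrest := ih _ hcard' hsub
      have hEq : α = (α - monomial a (coeff a α)) + monomial a (coeff a α) := by ring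
      rw [hEq]
      exact Ideal.add_mem _ hrest hmono_span
    · push_neg at h1
      obtain ⟨r, hr⟩ := h1
      have hrd : a (Sum.inl r) ≤ d₁ := (le_EE_iff.mp hr).2.1
      rcases lt_or_eq_of_le hrd with hlt | heq
      · exfalso
        have h2 := ann_coeff hα (EE d₁ g r - a)
        have hwr : EE d₁ g r - a ≤ EE d₁ g r := tsub_le_self
        have hwpos : 1 ≤ (EE d₁ g r - a) (Sum.inl r) := by
          rw [Finsupp.tsub_apply, EE_inl, if_pos rfl]
          omega
        rw [Finset.sum_eq_single_of_mem r (Finset.mem_univ r)] at h2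
        · rw [if_pos hwr, tsub_tsub_cancel_of_le hr] at h2
          exact hca h2
        · intro s' _ hne
          rw [if_neg]
          intro hle
          have h3 := Finsupp.le_def.mp hle (Sum.inl r)
          rw [EE_inl, if_neg hne] at h3
          omega
      · set w : Fin m →₀ ℕ :=
          Finsupp.comapDomain Sum.inr (EE d₁ g r - a) Sum.inr_injective.injOn with hwdef
        have hwk : ∀ k, w k = g r k - a (Sum.inr k) := by
          intro k
          show (EE d₁ g r - a) (Sum.inr k) = _
          rw [Finsupp.tsub_apply, EE_inr]
        have hw' : Finsupp.mapDomain Sum.inr w = EE d₁ g r - a := by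
          ext x
          rcases x with s' | k
          · rw [mapInr_inl, Finsupp.tsub_apply, EE_inl]
            split_ifs with hh
            · rw [← hh, heq]
              omega
            · omega
          · rw [mapInr_inr, hwk k, Finsupp.tsub_apply, EE_inr]
        have hwgr : w ≤ g r := by
          rw [Finsupp.le_def]
          intro k
          rw [hwk]
          omega
        set c : Fin (n + 1) → K :=
          fun t => coeff (EE d₁ g t - Finsupp.mapDomain Sum.inr w) α with hc
        set β : MvPolynomial (Fin (n + 1) ⊕ Fin m) K :=
          ∑ t, if w ≤ g t then monomial (EE d₁ g t - Finsupp.mapDomain Sum.inr w) (c t) else 0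
          with hβ
        have h6 : (∑ t, if w ≤ g t then c t else 0) = 0 := by
          have h7 := ann_coeff hα (Finsupp.mapDomain Sum.inr w)
          have h8 : (∑ t, if w ≤ g t then c t else 0) =
              ∑ t, if Finsupp.mapDomain Sum.inr w ≤ EE d₁ g t then
                coeff (EE d₁ g t - Finsupp.mapDomain Sum.inr w) α else 0 := by
            refine Finset.sum_congr rfl fun t _ => ?_
            by_cases hwt : w ≤ g t
            · rw [if_pos hwt, if_pos (mapInr_le_EE_iff.mpr hwt)]
            · rw [if_neg hwt, if_neg (fun hh => hwt (mapInr_le_EE_iff.mp hh))]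
          rw [h8, h7]
        have hterm : ∀ t, w ≤ g t →
            cAct (monomial (EE d₁ g t - Finsupp.mapDomain Sum.inr w) (c t))
              (∑ r', monomial (EE d₁ g r') (1 : K)) =
            monomial (Finsupp.mapDomain Sum.inr w) (c t) := by
          intro t hwt
          rw [cAct_monomial_f]
          have hle2 : Finsupp.mapDomain Sum.inr w ≤ EE d₁ g t := mapInr_le_EE_iff.mpr hwt
          rw [Finset.sum_eq_single_of_mem t (Finset.mem_univ t)]
          · rw [if_pos tsub_le_self, tsub_tsub_cancel_of_le hle2]
          · intro s' _ hne
            rw [if_neg]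
            intro hle
            have h3 := Finsupp.le_def.mp hle (Sum.inl t)
            rw [Finsupp.tsub_apply, EE_inl, if_pos rfl, mapInr_inl, EE_inl,
              if_neg hne] at h3
            omega
        have hβann : β ∈ cAnn (∑ r', monomial (EE d₁ g r') (1 : K)) := by
          rw [mem_cAnn]
          have h4 : cAct β (∑ r', monomial (EE d₁ g r') (1 : K)) =
              ∑ t, if w ≤ g t then monomial (Finsupp.mapDomain Sum.inr w) (c t) else 0 := by
            rw [hβ]
            rw [show cAct (∑ t, if w ≤ g t then
                monomial (EE d₁ g t - Finsupp.mapDomain Sum.inr w) (c t) else 0)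
                (∑ r', monomial (EE d₁ g r') (1 : K)) = _ from genAct_sum_left' _ _ _ _]
            refine Finset.sum_congr rfl fun t _ => ?_
            split_ifs with ht
            · exact hterm t ht
            · exact genAct_zero_left _ _
          rw [h4]
          have h5 : (∑ t, if w ≤ g t then monomial
                ((Finsupp.mapDomain Sum.inr w : (Fin (n + 1) ⊕ Fin m) →₀ ℕ)) (c t) else 0) =
              monomial ((Finsupp.mapDomain Sum.inr w : (Fin (n + 1) ⊕ Fin m) →₀ ℕ))
                (∑ t, if w ≤ g t then c t else 0) := by
            rw [map_sum]
            refine Finset.sum_congr rfl fun t _ => ?_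
            split_ifs with ht
            · rfl
            · exact (map_zero _).symm
          rw [h5, h6, map_zero]
        have hdiffmem : ∀ t, w ≤ g t →
            (monomial (EE d₁ g t - Finsupp.mapDomain Sum.inr w) (c t) -
              monomial (EE d₁ g r - Finsupp.mapDomain Sum.inr w) (c t)) ∈
            Ideal.span (genSet K n m d₁ d₂ g) := by
          intro t ht
          have hd := diff_mem (K := K) (d₁ := d₁) g hgdeg t r w ht hwgr
          have heq2 : monomial (EE d₁ g t - Finsupp.mapDomain Sum.inr w) (c t) -
              monomial (EE d₁ g r - Finsupp.mapDomain Sum.inr w) (c t) =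
              C (c t) * (monomial (EE d₁ g t - Finsupp.mapDomain Sum.inr w) (1 : K) -
                monomial (EE d₁ g r - Finsupp.mapDomain Sum.inr w) 1) := by
            rw [mul_sub, C_mul_monomial, C_mul_monomial]
            simp
          rw [heq2]
          exact Ideal.mul_mem_left _ _ hd
        have hβspan : β ∈ Ideal.span (genSet K n m d₁ d₂ g) := by
          have hsplit : β =
              (∑ t, if w ≤ g t then
                (monomial (EE d₁ g t - Finsupp.mapDomain Sum.inr w) (c t) -
                  monomial (EE d₁ g r - Finsupp.mapDomain Sum.inr w) (c t)) else 0) +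
              monomial (EE d₁ g r - Finsupp.mapDomain Sum.inr w)
                (∑ t, if w ≤ g t then c t else 0) := by
            rw [map_sum, ← Finset.sum_add_distrib, hβ]
            refine Finset.sum_congr rfl fun t _ => ?_
            split_ifs with ht
            · rw [sub_add_cancel]
            · rw [map_zero, add_zero]
          rw [hsplit, h6, map_zero, add_zero]
          exact Ideal.sum_mem _ fun t _ => by
            split_ifs with ht
            · exact hdiffmem t ht
            · exact Ideal.zero_mem _
        have hβc0 : ∀ b, coeff b α = 0 → coeff b β = 0 := by
          intro b hb0
          rw [hβ, MvPolynomial.coeff_sum]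
          apply Finset.sum_eq_zero
          intro t _
          split_ifs with ht
          · rw [coeff_monomial]
            split_ifs with he
            · simp only [hc]
              rw [he, hb0]
            · rfl
          · exact coeff_zero b
        have hEEa : EE d₁ g r - Finsupp.mapDomain Sum.inr w = a := by
          rw [hw', tsub_tsub_cancel_of_le hr]
        have hacoeff : coeff a β = coeff a α := by
          rw [hβ, MvPolynomial.coeff_sum]
          rw [Finset.sum_eq_single_of_mem r (Finset.mem_univ r)]
          · rw [if_pos hwgr, coeff_monomial, if_pos hEEa]
            simp only [hc]
            rw [hEEa]
          · intro t _ hne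
            split_ifs with ht
            · rw [coeff_monomial, if_neg]
              intro he
              have h8 := DFunLike.congr_fun he (Sum.inl t)
              rw [Finsupp.tsub_apply, EE_inl, if_pos rfl, mapInr_inl] at h8
              have h9 : a (Sum.inl t) = 0 := (le_EE_iff.mp hr).1 t (Ne.symm hne)
              omega
            · rfl
        have hsub : α - β ∈ cAnn (∑ r', monomial (EE d₁ g r') (1 : K)) := sub_mem hα hβann
        have hsupp' : (α - β).support ⊆ α.support.erase a := by
          intro b hb
          have hb' := MvPolynomial.mem_support_iff.mp hb
          rw [Finset.mem_erase]
          have hne : b ≠ a := by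
            rintro rfl
            exact hb' (by rw [MvPolynomial.coeff_sub, hacoeff, sub_self])
          refine ⟨hne, MvPolynomial.mem_support_iff.mpr fun h0 => hb' ?_⟩
          rw [MvPolynomial.coeff_sub, h0, hβc0 b h0, sub_zero]
        have hcard' : (α - β).support.card ≤ N :=
          le_trans (Finset.card_le_card hsupp')
            (by rw [Finset.card_erase_of_mem ha]; omega)
        have hrest := ih _ hcard' hsub
        have hEq : α = (α - β) + β := by ring
        rw [hEq]
        exact Ideal.add_mem _ hrest hβspan

end StmtFourMain


open MvPolynomial in
theorem stmt_4 {K : Type*} [Field K] [CharZero K] (n m d₁ d₂ : ℕ)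
    (hd₁ : 1 ≤ d₁) (hd₂ : 2 ≤ d₂)
    (g : Fin (n + 1) → (Fin m →₀ ℕ))
    (hgdeg : ∀ r, (∑ k, g r k) = d₂)
    (hginj : Function.Injective g)
    (f : MvPolynomial (Fin (n + 1) ⊕ Fin m) K)
    (hf : f = ∑ r, X (Sum.inl r) ^ d₁ * monomial ((g r).mapDomain Sum.inr) 1) :
    cAnn f = Ideal.span {α : MvPolynomial (Fin (n + 1) ⊕ Fin m) K |
      -- (1) the products `X_i X_j` (`i < j`) and the powers `X_k^{d₁+1}`
      (∃ i j : Fin (n + 1), i < j ∧ α = X (Sum.inl i) * X (Sum.inl j)) ∨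
      (∃ k : Fin (n + 1), α = X (Sum.inl k) ^ (d₁ + 1)) ∨
      -- (2) all monic monomials of degree `d₂ + 1` in the `U`'s
      (∃ s : Fin m →₀ ℕ, (∑ k, s k) = d₂ + 1 ∧
        α = monomial (s.mapDomain Sum.inr) 1) ∨
      -- (3) the monomials `U^s` of degree `1 ≤ j ≤ d₂` dividing no `g_r`,
      -- minimal with this property
      (∃ s : Fin m →₀ ℕ, 1 ≤ (∑ k, s k) ∧ (∑ k, s k) ≤ d₂ ∧
        (∀ r, ¬ s ≤ g r) ∧ (∀ t, t < s → ∃ r, t ≤ g r) ∧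
        α = monomial (s.mapDomain Sum.inr) 1) ∨
      -- (4) the monomials `X_r U_i` where `u_i` does not divide `g_r`
      (∃ (r : Fin (n + 1)) (i : Fin m), g r i = 0 ∧
        α = X (Sum.inl r) * X (Sum.inr i)) ∨
      -- (5) the monomials `X_r U^t`, `t` of degree `1 ≤ j ≤ d₂` minimal among the
      -- monomials not dividing `g_r`
      (∃ (r : Fin (n + 1)) (t : Fin m →₀ ℕ), 1 ≤ (∑ k, t k) ∧ (∑ k, t k) ≤ d₂ ∧
        ¬ t ≤ g r ∧ (∀ t', t' < t → t' ≤ g r) ∧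
        α = X (Sum.inl r) * monomial (t.mapDomain Sum.inr) 1) ∨
      -- (6) the binomials `X_r^{d₁} U^ρ − X_s^{d₁} U^σ` with
      -- `g_r = u^ρ·gcd(g_r,g_s)`, `g_s = u^σ·gcd(g_r,g_s)`
      (∃ (r s : Fin (n + 1)) (ρ τ : Fin m →₀ ℕ), (∑ k, ρ k) = (∑ k, τ k) ∧
        g r = ρ + (g r ⊓ g s) ∧ g s = τ + (g r ⊓ g s) ∧
        α = X (Sum.inl r) ^ d₁ * monomial (ρ.mapDomain Sum.inr) 1 -
            X (Sum.inl s) ^ d₁ * monomial (τ.mapDomain Sum.inr) 1)} := by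
  classical
  subst hf
  have hf' : (∑ r, X (Sum.inl r) ^ d₁ * monomial ((g r).mapDomain Sum.inr) (1 : K)) =
      ∑ r, monomial (EE d₁ g r) (1 : K) := by
    refine Finset.sum_congr rfl fun r _ => ?_
    rw [Xpow_mul_monomial_eq]
    rfl
  rw [hf']
  show cAnn _ = Ideal.span (genSet K n m d₁ d₂ g)
  apply le_antisymm
  · intro α hα
    exact ann_le_span hd₁ g hgdeg α.support.card α le_rfl hα
  · exact span_le_ann hd₁ g hgdeg


end CW
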